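/- For every k ≥ 1, there exists a matching with a separated layout that contains no ⋄-pattern of size larger than k×k (i.e., no (k+1)-⋄-pattern) and whose mixed page number equals 2k. -/

import Mathlib

/-!
Common framework: ordered graphs on vertex set `Fin n` (the vertex order is the
order of `Fin n`), with edges encoded as pairs `(u, v)` with `u < v`.
-/

namespace MixedLayouts

/-- An ordered graph: vertices `Fin n` (with their natural linear order),
edges given as ordered pairs `(u, v)` with `u < v`. -/
structure OGraph where
  n : ℕ
  E : Finset (Fin n × Fin n)
  lt_of_mem : ∀ e ∈ E, e.1 < e.2

/-- Two edges `e = uv`, `f = xy` cross: `u ≺ x ≺ v ≺ y` (or symmetrically). -/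
def Cross {n : ℕ} (e f : Fin n × Fin n) : Prop :=
  (e.1 < f.1 ∧ f.1 < e.2 ∧ e.2 < f.2) ∨ (f.1 < e.1 ∧ e.1 < f.2 ∧ f.2 < e.2)

/-- Two edges `e = uv`, `f = xy` nest: `u ≺ x ≺ y ≺ v` (or symmetrically). -/
def Nest {n : ℕ} (e f : Fin n × Fin n) : Prop :=
  (e.1 < f.1 ∧ f.2 < e.2) ∨ (f.1 < e.1 ∧ e.2 < f.2)

/-- `e ↗ f`: both endpoints increase (for separated layouts this is crossing). -/
def Up {n : ℕ} (e f : Fin n × Fin n) : Prop := e.1 < f.1 ∧ e.2 < f.2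

/-- `e ↘ f`: first endpoint increases, second decreases
(for separated layouts this means `f` nests inside `e`). -/
def Down {n : ℕ} (e f : Fin n × Fin n) : Prop := e.1 < f.1 ∧ f.2 < e.2

namespace OGraph

/-- Degree of a vertex. -/
def degree (G : OGraph) (v : Fin G.n) : ℕ :=
  (G.E.filter fun e => e.1 = v ∨ e.2 = v).card

/-- An ordered matching: every vertex has degree exactly one. -/
def IsMatching (G : OGraph) : Prop := ∀ v : Fin G.n, G.degree v = 1

/-- A separated layout of a bipartite ordered graph: there is a threshold `t`
such that every edge goes from a vertex before `t` to a vertex from `t` on. -/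
def Separated (G : OGraph) : Prop :=
  ∃ t : ℕ, ∀ e ∈ G.E, (e.1 : ℕ) < t ∧ t ≤ (e.2 : ℕ)

/-- An `s`-stack `q`-queue layout: a partition of the edges into `s` stacks
(pages `0, …, s-1`, pairwise non-crossing) and `q` queues
(pages `s, …, s+q-1`, pairwise non-nesting). -/
def HasLayout (G : OGraph) (s q : ℕ) : Prop :=
  ∃ c : Fin G.n × Fin G.n → ℕ,
    (∀ e ∈ G.E, c e < s + q) ∧
    ∀ e ∈ G.E, ∀ f ∈ G.E, c e = c f →
      (c e < s → ¬ Cross e f) ∧ (s ≤ c e → ¬ Nest e f)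

/-- The mixed page number: the minimum of `s + q` over all
`s`-stack `q`-queue layouts. -/
noncomputable def mn (G : OGraph) : ℕ :=
  sInf {m | ∃ s q, s + q = m ∧ G.HasLayout s q}

/-- A `t`-thick `k`-twist: `k` groups of `t` edges each, edges within a group
pairwise nest, edges from different groups pairwise cross. -/
def HasThickTwist (G : OGraph) (k t : ℕ) : Prop :=
  ∃ e : Fin k → Fin t → Fin G.n × Fin G.n,
    (∀ i j, e i j ∈ G.E) ∧
    (Function.Injective fun p : Fin k × Fin t => e p.1 p.2) ∧
    (∀ i : Fin k, ∀ j j' : Fin t, j ≠ j' → Nest (e i j) (e i j')) ∧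
    (∀ i i' : Fin k, ∀ j j' : Fin t, i ≠ i' → Cross (e i j) (e i' j'))

/-- A `t`-thick `k`-rainbow: `k` groups of `t` edges each, edges within a group
pairwise cross, edges from different groups pairwise nest. -/
def HasThickRainbow (G : OGraph) (k t : ℕ) : Prop :=
  ∃ e : Fin k → Fin t → Fin G.n × Fin G.n,
    (∀ i j, e i j ∈ G.E) ∧
    (Function.Injective fun p : Fin k × Fin t => e p.1 p.2) ∧
    (∀ i : Fin k, ∀ j j' : Fin t, j ≠ j' → Cross (e i j) (e i j')) ∧
    (∀ i i' : Fin k, ∀ j j' : Fin t, i ≠ i' → Nest (e i j) (e i' j'))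

/-- A `k`-thick pattern: a `k`-thick `k`-twist or a `k`-thick `k`-rainbow. -/
def HasThickPattern (G : OGraph) (k : ℕ) : Prop :=
  G.HasThickTwist k k ∨ G.HasThickRainbow k k

/-- `G` contains a `k`-⋄-pattern: `k²` edges `e i j` with
`e i j ↗ e i j'` for `j < j'` and `e i j ↘ e i' j` for `i < i'`. -/
def HasDiamond (G : OGraph) (k : ℕ) : Prop :=
  ∃ e : Fin k → Fin k → Fin G.n × Fin G.n,
    (∀ i j, e i j ∈ G.E) ∧
    (Function.Injective fun p : Fin k × Fin k => e p.1 p.2) ∧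
    (∀ i : Fin k, ∀ j j' : Fin k, j < j' → Up (e i j) (e i j')) ∧
    (∀ j : Fin k, ∀ i i' : Fin k, i < i' → Down (e i j) (e i' j))

/-- The edge set of `G` is exactly a `k`-⋄-pattern. -/
def FormsDiamond (G : OGraph) (k : ℕ) : Prop :=
  ∃ e : Fin k → Fin k → Fin G.n × Fin G.n,
    (Function.Injective fun p : Fin k × Fin k => e p.1 p.2) ∧
    (∀ i : Fin k, ∀ j j' : Fin k, j < j' → Up (e i j) (e i j')) ∧
    (∀ j : Fin k, ∀ i i' : Fin k, i < i' → Down (e i j) (e i' j)) ∧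
    G.E = Finset.image (fun p : Fin k × Fin k => e p.1 p.2) Finset.univ

/-- Delete an edge. -/
def erase (G : OGraph) (e : Fin G.n × Fin G.n) : OGraph :=
  ⟨G.n, G.E.erase e, fun f hf => G.lt_of_mem f (Finset.mem_of_mem_erase hf)⟩

/-- `(s,q)`-critical: no `s`-stack `q`-queue layout, but every one-edge-deleted
subgraph has one. -/
def IsSQCritical (G : OGraph) (s q : ℕ) : Prop :=
  ¬ G.HasLayout s q ∧ ∀ e ∈ G.E, (G.erase e).HasLayout s q

/-- `k`-critical: `mn G > k`, but `mn (G - e) ≤ k` for every edge `e`. -/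
def IsKCritical (G : OGraph) (k : ℕ) : Prop :=
  k < G.mn ∧ ∀ e ∈ G.E, (G.erase e).mn ≤ k

end OGraph

/-- An ordered graph `G` contains the pattern `H`: an order-preserving injection
of the vertices mapping edges to edges. -/
def Contains (G H : OGraph) : Prop :=
  ∃ φ : Fin H.n → Fin G.n, StrictMono φ ∧ ∀ e ∈ H.E, (φ e.1, φ e.2) ∈ G.E

/-- A chain of the poset `P(M)` of a separated matching
(elements: edges; order: `↗`). -/
def IsPChain {n : ℕ} (C : Finset (Fin n × Fin n)) : Prop :=
  ∀ e ∈ C, ∀ f ∈ C, e ≠ f → Up e f ∨ Up f e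

/-- An antichain of the poset `P(M)` of a separated matching. -/
def IsPAntichain {n : ℕ} (C : Finset (Fin n × Fin n)) : Prop :=
  ∀ e ∈ C, ∀ f ∈ C, e ≠ f → ¬ Up e f ∧ ¬ Up f e

/-- `c_i` for an abstract finite poset: the maximum number of elements
covered by `i` chains. -/
noncomputable def chainCover (α : Type) [Fintype α] [PartialOrder α] [DecidableEq α]
    (i : ℕ) : ℕ :=
  sSup {m | ∃ C : Fin i → Finset α,
    (∀ j, IsChain (· ≤ ·) (C j : Set α)) ∧ (Finset.univ.biUnion C).card = m}

/-- `a_i` for an abstract finite poset: the maximum number of elements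
covered by `i` antichains. -/
noncomputable def antichainCover (α : Type) [Fintype α] [PartialOrder α] [DecidableEq α]
    (i : ℕ) : ℕ :=
  sSup {m | ∃ A : Fin i → Finset α,
    (∀ j, IsAntichain (· ≤ ·) (A j : Set α)) ∧ (Finset.univ.biUnion A).card = m}

end MixedLayouts

namespace MixedLayouts

/-! ### The construction -/

/-- Offsets of the blocks: block `b` (for `b < 2k`) has length `2k - b`. -/
def X (k b : ℕ) : ℕ := ∑ i ∈ Finset.range b, (2*k - i)

/-- The number of edges (and size of each side of the matching). -/
def NN (k : ℕ) : ℕ := X k (2*k)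

lemma X_zero (k : ℕ) : X k 0 = 0 := by simp [X]

lemma X_succ (k b : ℕ) : X k (b+1) = X k b + (2*k - b) :=
  Finset.sum_range_succ _ _

lemma X_mono (k : ℕ) {b b' : ℕ} (h : b ≤ b') : X k b ≤ X k b' :=
  Finset.sum_le_sum_of_subset (Finset.range_subset_range.mpr h)

lemma X_le_N (k : ℕ) {b : ℕ} (h : b ≤ 2*k) : X k b ≤ NN k := X_mono k h

/-- The edge of block `b`, index `j` within the block. -/
def edg (k b j : ℕ) (hb : b < 2*k) (hj : j < 2*k - b) :
    Fin (2 * NN k) × Fin (2 * NN k) :=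
  (⟨X k b + j, by
      have h1 := X_succ k b
      have h2 := X_le_N k (b := b+1) (by omega)
      omega⟩,
   ⟨2 * NN k - X k (b+1) + j, by
      have h1 := X_succ k b
      have h2 := X_le_N k (b := b+1) (by omega)
      omega⟩)

lemma edg_fst (k b j : ℕ) (hb : b < 2*k) (hj : j < 2*k - b) :
    ((edg k b j hb hj).1 : ℕ) = X k b + j := rfl

lemma edg_snd (k b j : ℕ) (hb : b < 2*k) (hj : j < 2*k - b) :
    ((edg k b j hb hj).2 : ℕ) = 2 * NN k - X k (b+1) + j := rfl

lemma edg_fst_lt (k b j : ℕ) (hb : b < 2*k) (hj : j < 2*k - b) :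
    ((edg k b j hb hj).1 : ℕ) < NN k := by
  rw [edg_fst]
  have h1 := X_succ k b
  have h2 := X_le_N k (b := b+1) (by omega)
  omega

lemma edg_snd_ge (k b j : ℕ) (hb : b < 2*k) (hj : j < 2*k - b) :
    NN k ≤ ((edg k b j hb hj).2 : ℕ) := by
  rw [edg_snd]
  have h1 := X_succ k b
  have h2 := X_le_N k (b := b+1) (by omega)
  omega

def InE (k : ℕ) (e : Fin (2 * NN k) × Fin (2 * NN k)) : Prop :=
  ∃ b, ∃ hb : b < 2*k, ∃ j, ∃ hj : j < 2*k - b, e = edg k b j hb hj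

noncomputable instance InE.instDec (k : ℕ) : DecidablePred (InE k) :=
  Classical.decPred _

/-- The separated matching: `2k` blocks, block `b` a `(2k-b)`-twist, blocks
pairwise nested. -/
noncomputable def MM (k : ℕ) : OGraph :=
  ⟨2 * NN k, Finset.univ.filter (InE k), by
    rintro e he
    obtain ⟨b, hb, j, hj, rfl⟩ := (Finset.mem_filter.mp he).2
    have h1 := edg_fst_lt k b j hb hj
    have h2 := edg_snd_ge k b j hb hj
    exact Fin.lt_def.mpr (by omega)⟩

lemma mem_MM {k : ℕ} {e : Fin (2 * NN k) × Fin (2 * NN k)} :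
    e ∈ (MM k).E ↔ InE k e := by
  constructor
  · intro h; exact (Finset.mem_filter.mp h).2
  · intro h; exact Finset.mem_filter.mpr ⟨Finset.mem_univ _, h⟩

lemma edg_mem (k b j : ℕ) (hb : b < 2*k) (hj : j < 2*k - b) :
    edg k b j hb hj ∈ (MM k).E :=
  mem_MM.mpr ⟨b, hb, j, hj, rfl⟩

/-! ### Interaction lemmas -/

section Interact

variable {k b j b' j' : ℕ} {hb : b < 2*k} {hj : j < 2*k - b}
  {hb' : b' < 2*k} {hj' : j' < 2*k - b'}

lemma up_iff :
    Up (edg k b j hb hj) (edg k b' j' hb' hj') ↔ (b = b' ∧ j < j') := by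
  simp only [Up, edg, Fin.mk_lt_mk]
  have s1 := X_succ k b
  have s2 := X_succ k b'
  have n1 := X_le_N k (b := b+1) (by omega)
  have n2 := X_le_N k (b := b'+1) (by omega)
  rcases lt_trichotomy b b' with h | h | h
  · have m1 : X k (b+1) ≤ X k b' := X_mono k (by omega)
    omega
  · subst h; omega
  · have m1 : X k (b'+1) ≤ X k b := X_mono k (by omega)
    omega

lemma down_iff :
    Down (edg k b j hb hj) (edg k b' j' hb' hj') ↔ b < b' := by
  simp only [Down, edg, Fin.mk_lt_mk]
  have s1 := X_succ k b
  have s2 := X_succ k b'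
  have n1 := X_le_N k (b := b+1) (by omega)
  have n2 := X_le_N k (b := b'+1) (by omega)
  rcases lt_trichotomy b b' with h | h | h
  · have m1 : X k (b+1) ≤ X k b' := X_mono k (by omega)
    omega
  · subst h; omega
  · have m1 : X k (b'+1) ≤ X k b := X_mono k (by omega)
    omega

lemma cross_iff :
    Cross (edg k b j hb hj) (edg k b' j' hb' hj') ↔ (b = b' ∧ j ≠ j') := by
  simp only [Cross, edg, Fin.mk_lt_mk]
  have s1 := X_succ k b
  have s2 := X_succ k b'
  have n1 := X_le_N k (b := b+1) (by omega)
  have n2 := X_le_N k (b := b'+1) (by omega)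
  rcases lt_trichotomy b b' with h | h | h
  · have m1 : X k (b+1) ≤ X k b' := X_mono k (by omega)
    omega
  · subst h; omega
  · have m1 : X k (b'+1) ≤ X k b := X_mono k (by omega)
    omega

lemma nest_iff :
    Nest (edg k b j hb hj) (edg k b' j' hb' hj') ↔ b ≠ b' := by
  simp only [Nest, edg, Fin.mk_lt_mk]
  have s1 := X_succ k b
  have s2 := X_succ k b'
  have n1 := X_le_N k (b := b+1) (by omega)
  have n2 := X_le_N k (b := b'+1) (by omega)
  rcases lt_trichotomy b b' with h | h | h
  · have m1 : X k (b+1) ≤ X k b' := X_mono k (by omega)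
    omega
  · subst h; omega
  · have m1 : X k (b'+1) ≤ X k b := X_mono k (by omega)
    omega

lemma left_injE {k b j b' j' : ℕ} (hj : j < 2*k - b) (hj' : j' < 2*k - b')
    (h : X k b + j = X k b' + j') : b = b' ∧ j = j' := by
  have s1 := X_succ k b
  have s2 := X_succ k b'
  rcases lt_trichotomy b b' with hlt | hlt | hlt
  · have m1 : X k (b+1) ≤ X k b' := X_mono k (by omega)
    omega
  · subst hlt; omega
  · have m1 : X k (b'+1) ≤ X k b := X_mono k (by omega)
    omega

lemma right_injE {k b j b' j' : ℕ} (hb : b < 2*k) (hj : j < 2*k - b)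
    (hb' : b' < 2*k) (hj' : j' < 2*k - b')
    (h : 2 * NN k - X k (b+1) + j = 2 * NN k - X k (b'+1) + j') :
    b = b' ∧ j = j' := by
  have s1 := X_succ k b
  have s2 := X_succ k b'
  have n1 := X_le_N k (b := b+1) (by omega)
  have n2 := X_le_N k (b := b'+1) (by omega)
  rcases lt_trichotomy b b' with hlt | hlt | hlt
  · have m1 : X k (b+1) ≤ X k b' := X_mono k (by omega)
    omega
  · subst hlt; omega
  · have m1 : X k (b'+1) ≤ X k b := X_mono k (by omega)
    omega

end Interact

/-! ### Decomposition (surjectivity) -/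

lemma decompose_left (k : ℕ) :
    ∀ c ≤ 2*k, ∀ u < X k c, ∃ b, ∃ hb : b < 2*k, ∃ j, ∃ hj : j < 2*k - b,
      u = X k b + j := by
  intro c
  induction c with
  | zero => intro _ u hu; rw [X_zero] at hu; omega
  | succ c ih =>
    intro hc u hu
    rw [X_succ] at hu
    by_cases h : u < X k c
    · exact ih (by omega) u h
    · exact ⟨c, by omega, u - X k c, by omega, by omega⟩

lemma decompose_right (k : ℕ) :
    ∀ c ≤ 2*k, ∀ w, 2 * NN k - X k c ≤ w → w < 2 * NN k →
      ∃ b, ∃ hb : b < 2*k, ∃ j, ∃ hj : j < 2*k - b,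
        w = 2 * NN k - X k (b+1) + j := by
  intro c
  induction c with
  | zero => intro _ w hw hw2; rw [X_zero] at hw; omega
  | succ c ih =>
    intro hc w hw hw2
    by_cases h : 2 * NN k - X k c ≤ w
    · exact ih (by omega) w h hw2
    · have s1 := X_succ k c
      have n1 := X_le_N k (b := c+1) hc
      refine ⟨c, by omega, w - (2 * NN k - X k (c+1)), by omega, by omega⟩

/-! ### The matching property -/

lemma MM_isMatching (k : ℕ) : (MM k).IsMatching := by
  intro v
  unfold OGraph.degree
  rcases lt_or_ge (v : ℕ) (NN k) with hv | hv
  · obtain ⟨b, hb, j, hj, hx⟩ :=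
      decompose_left k (2*k) le_rfl (v : ℕ) hv
    have hset : (MM k).E.filter (fun e => e.1 = v ∨ e.2 = v)
        = {edg k b j hb hj} := by
      apply Finset.eq_singleton_iff_unique_mem.mpr
      constructor
      · refine Finset.mem_filter.mpr ⟨edg_mem k b j hb hj, Or.inl ?_⟩
        apply Fin.ext
        rw [edg_fst]; omega
      · rintro e he
        obtain ⟨heE, hor⟩ := Finset.mem_filter.mp he
        obtain ⟨b', hb', j', hj', rfl⟩ := mem_MM.mp heE
        rcases hor with h | h
        · have hvv : X k b' + j' = X k b + j := by
            have := congrArg Fin.val h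
            rw [edg_fst] at this; omega
          obtain ⟨rfl, rfl⟩ := left_injE hj' hj hvv
          rfl
        · have h1 := edg_snd_ge k b' j' hb' hj'
          have := congrArg Fin.val h
          omega
    rw [hset]; exact Finset.card_singleton _
  · obtain ⟨b, hb, j, hj, hx⟩ :=
      decompose_right k (2*k) le_rfl (v : ℕ)
        (by have h0 : X k (2*k) = NN k := rfl; omega)
        (by have h0 : (MM k).n = 2 * NN k := rfl; have := v.isLt; omega)
    have hset : (MM k).E.filter (fun e => e.1 = v ∨ e.2 = v)
        = {edg k b j hb hj} := by
      apply Finset.eq_singleton_iff_unique_mem.mpr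
      constructor
      · refine Finset.mem_filter.mpr ⟨edg_mem k b j hb hj, Or.inr ?_⟩
        apply Fin.ext
        rw [edg_snd]; omega
      · rintro e he
        obtain ⟨heE, hor⟩ := Finset.mem_filter.mp he
        obtain ⟨b', hb', j', hj', rfl⟩ := mem_MM.mp heE
        rcases hor with h | h
        · have h1 := edg_fst_lt k b' j' hb' hj'
          have := congrArg Fin.val h
          omega
        · have hvv : 2 * NN k - X k (b'+1) + j'
              = 2 * NN k - X k (b+1) + j := by
            have := congrArg Fin.val h
            rw [edg_snd] at this; omega
          obtain ⟨rfl, rfl⟩ := right_injE hb' hj' hb hj hvv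
          rfl
    rw [hset]; exact Finset.card_singleton _

lemma MM_separated (k : ℕ) : (MM k).Separated := by
  refine ⟨NN k, ?_⟩
  intro e he
  obtain ⟨b, hb, j, hj, rfl⟩ := mem_MM.mp he
  exact ⟨edg_fst_lt k b j hb hj, edg_snd_ge k b j hb hj⟩

/-! ### No large diamond -/

lemma MM_no_diamond (k : ℕ) (hk : 1 ≤ k) : ¬ (MM k).HasDiamond (k+1) := by
  rintro ⟨e, hmem, _hinj, hup, hdown⟩
  have hd : ∀ i j : Fin (k+1), ∃ b, ∃ hb : b < 2*k, ∃ jj,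
      ∃ hj : jj < 2*k - b, e i j = edg k b jj hb hj :=
    fun i j => mem_MM.mp (hmem i j)
  choose B hB J hJ hE using hd
  have hrow : ∀ i : Fin (k+1), ∀ j j' : Fin (k+1), j < j' →
      B i j = B i j' ∧ J i j < J i j' := by
    intro i j j' h
    have h2 := hup i j j' h
    rw [hE i j, hE i j'] at h2
    exact up_iff.mp h2
  have hcol : ∀ i i' : Fin (k+1), i < i' → B i 0 < B i' 0 := by
    intro i i' h
    have h2 := hdown 0 i i' h
    rw [hE i 0, hE i' 0] at h2
    exact down_iff.mp h2
  -- in every row, J increases, so J i ⟨k⟩ ≥ k, hence block of row i is < k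
  have hJge : ∀ i : Fin (k+1), ∀ m : ℕ, ∀ hm : m ≤ k,
      m ≤ J i ⟨m, by omega⟩ := by
    intro i m
    induction m with
    | zero => intro _; omega
    | succ p ih =>
      intro hm
      have h1 := ih (by omega)
      have h2 := (hrow i ⟨p, by omega⟩ ⟨p+1, by omega⟩
        (by simp [Fin.lt_def])).2
      omega
  have hBlt : ∀ i : Fin (k+1), B i 0 < k := by
    intro i
    have h1 := hJge i k le_rfl
    have h2 := hJ i ⟨k, by omega⟩
    have h3 : B i 0 = B i ⟨k, by omega⟩ :=
      (hrow i 0 ⟨k, by omega⟩ (by simp [Fin.lt_def]; omega)).1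
    omega
  have hBge : ∀ m : ℕ, ∀ hm : m ≤ k, m ≤ B ⟨m, by omega⟩ 0 := by
    intro m
    induction m with
    | zero => intro _; omega
    | succ p ih =>
      intro hm
      have h1 := ih (by omega)
      have h2 := hcol ⟨p, by omega⟩ ⟨p+1, by omega⟩ (by simp [Fin.lt_def])
      omega
  have := hBge k le_rfl
  have := hBlt ⟨k, by omega⟩
  omega

/-! ### Upper bound: a `k`-stack `k`-queue layout -/

def blk (k u : ℕ) : ℕ :=
  ((Finset.range (2*k)).filter (fun c => X k (c+1) ≤ u)).card

lemma blk_edg (k : ℕ) {b j : ℕ} (hb : b < 2*k) (hj : j < 2*k - b) :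
    blk k (X k b + j) = b := by
  unfold blk
  have hset : (Finset.range (2*k)).filter (fun c => X k (c+1) ≤ X k b + j)
      = Finset.range b := by
    ext c
    simp only [Finset.mem_filter, Finset.mem_range]
    constructor
    · rintro ⟨h2k, hle⟩
      by_contra hcb
      push_neg at hcb
      have m1 : X k (b+1) ≤ X k (c+1) := X_mono k (by omega)
      have s1 := X_succ k b
      omega
    · intro hcb
      refine ⟨by omega, ?_⟩
      have m1 : X k (c+1) ≤ X k b := X_mono k (by omega)
      omega
  rw [hset, Finset.card_range]

def pg (k u : ℕ) : ℕ :=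
  if blk k u < k then k + blk k u else u - X k (blk k u)

lemma pg_edg (k : ℕ) {b j : ℕ} (hb : b < 2*k) (hj : j < 2*k - b) :
    pg k (X k b + j) = if b < k then k + b else j := by
  unfold pg
  rw [blk_edg k hb hj]
  by_cases h : b < k <;> simp [h] <;> omega

lemma MM_hasLayout (k : ℕ) : (MM k).HasLayout k k := by
  refine ⟨fun e => pg k (e.1 : ℕ), ?_, ?_⟩
  · intro e he
    obtain ⟨b, hb, j, hj, rfl⟩ := mem_MM.mp he
    show pg k ((edg k b j hb hj).1 : ℕ) < k + k
    rw [edg_fst, pg_edg k hb hj]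
    by_cases h : b < k <;> simp [h] <;> omega
  · intro e he f hf hcef
    obtain ⟨b, hb, j, hj, rfl⟩ := mem_MM.mp he
    obtain ⟨b', hb', j', hj', rfl⟩ := mem_MM.mp hf
    have hcef' : pg k ((edg k b j hb hj).1 : ℕ)
        = pg k ((edg k b' j' hb' hj').1 : ℕ) := hcef
    rw [edg_fst, edg_fst, pg_edg k hb hj, pg_edg k hb' hj'] at hcef'
    show (pg k ((edg k b j hb hj).1 : ℕ) < k → _) ∧
      (k ≤ pg k ((edg k b j hb hj).1 : ℕ) → _)
    rw [edg_fst, pg_edg k hb hj]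
    constructor
    · intro hlt
      change ¬ Cross (n := 2 * NN k) (edg k b j hb hj) (edg k b' j' hb' hj')
      rw [cross_iff]
      by_cases h : b < k <;> by_cases h' : b' < k <;>
        simp [h, h'] at hcef' hlt ⊢ <;> omega
    · intro hge
      change ¬ Nest (n := 2 * NN k) (edg k b j hb hj) (edg k b' j' hb' hj')
      rw [nest_iff]
      by_cases h : b < k <;> by_cases h' : b' < k <;>
        simp [h, h'] at hcef' hge ⊢ <;> omega

/-! ### Lower bound -/

lemma MM_no_small_layout (k s q : ℕ) (hsq : s + q < 2*k) :
    ¬ (MM k).HasLayout s q := by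
  rintro ⟨c, hlt, hcond⟩
  have hq2 : q + 1 ≤ 2*k := by omega
  by_cases H : ∀ b : Fin (q+1), ∃ jj, ∃ hj : jj < 2*k - (b : ℕ),
      s ≤ c (edg k b jj (lt_of_lt_of_le b.isLt hq2) hj)
  · -- all of the first q+1 blocks have an edge on a queue page: pigeonhole
    choose jf hjf hcf using H
    have hinj : Function.Injective (fun b : Fin (q+1) =>
        (⟨c (edg k b (jf b) (lt_of_lt_of_le b.isLt hq2) (hjf b)) - s, by
          have h1 := hlt _ (edg_mem k b (jf b) (lt_of_lt_of_le b.isLt hq2) (hjf b))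
          have h2 := hcf b
          omega⟩ : Fin q)) := by
      intro b1 b2 heq
      simp only [Fin.mk.injEq] at heq
      by_contra hne
      have hbne : (b1 : ℕ) ≠ (b2 : ℕ) := fun h => hne (Fin.ext h)
      have hceq : c (edg k b1 (jf b1) (lt_of_lt_of_le b1.isLt hq2) (hjf b1))
          = c (edg k b2 (jf b2) (lt_of_lt_of_le b2.isLt hq2) (hjf b2)) := by
        have := hcf b1; have := hcf b2; omega
      have hno := (hcond _ (edg_mem ..) _ (edg_mem ..) hceq).2 (hcf b1)
      exact hno (nest_iff.mpr hbne)
    have := Fintype.card_le_of_injective _ hinj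
    simp only [Fintype.card_fin] at this
    omega
  · push_neg at H
    obtain ⟨b, hbq⟩ := H
    have hb2k : (b : ℕ) < 2*k := lt_of_lt_of_le b.isLt hq2
    have hsbig : s < 2*k - (b : ℕ) := by
      have := b.isLt; omega
    have hinj : Function.Injective (fun j : Fin (2*k - (b : ℕ)) =>
        (⟨c (edg k b j hb2k j.isLt), hbq j j.isLt⟩ : Fin s)) := by
      intro j1 j2 heq
      simp only [Fin.mk.injEq] at heq
      by_contra hne
      have hjne : (j1 : ℕ) ≠ (j2 : ℕ) := fun h => hne (Fin.ext h)
      have hno := (hcond _ (edg_mem ..) _ (edg_mem ..) heq).1 (hbq j1 j1.isLt)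
      exact hno (cross_iff.mpr ⟨rfl, hjne⟩)
    have := Fintype.card_le_of_injective _ hinj
    simp only [Fintype.card_fin] at this
    omega

lemma MM_mn (k : ℕ) : (MM k).mn = 2*k := by
  have h2k : 2*k ∈ {m | ∃ s q, s + q = m ∧ (MM k).HasLayout s q} :=
    ⟨k, k, by omega, MM_hasLayout k⟩
  refine le_antisymm (Nat.sInf_le h2k) ?_
  refine le_csInf ⟨2*k, h2k⟩ ?_
  rintro m ⟨s, q, rfl, hlay⟩
  by_contra hm
  push_neg at hm
  exact MM_no_small_layout k s q hm hlay

/-- For every `k ≥ 1` there is a separated matching with no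
`(k+1)`-⋄-pattern whose mixed page number equals `2k`. -/
theorem exists_matching_no_large_diamond_mn_eq (k : ℕ) (hk : 1 ≤ k) :
    ∃ M : OGraph, M.IsMatching ∧ M.Separated ∧
      ¬ M.HasDiamond (k + 1) ∧ M.mn = 2 * k :=
  ⟨MM k, MM_isMatching k, MM_separated k, MM_no_diamond k hk, MM_mn k⟩

end MixedLayouts
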